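/- Let i_j ∈ C_j be arbitrary for each 1 ≤ j ≤ r, let J = {1, …, n−1} \ {jq : 1 ≤ j ≤ r}, and for 1 ≤ j ≤ r let v_j = Σ_{k=i_j}^{jq} ε_k ∈ ℤ^{n−1}, where ε_1, …, ε_{n−1} is the standard basis of ℤ^{n−1}. Then the ℤ-submodule of ℤ^{n−1} generated by {v_j : 1 ≤ j ≤ r} ∪ {ε_k : k ∈ J} is all of ℤ^{n−1}. -/

import Mathlib

/-- Let `i_j ∈ C_j` be arbitrary for each `1 ≤ j ≤ r`, let
`J = {1,…,n−1} \ {jq : 1 ≤ j ≤ r}`, and for `1 ≤ j ≤ r` let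
`v_j = Σ_{k=i_j}^{jq} ε_k ∈ ℤ^{n−1}` (standard basis `ε_1,…,ε_{n−1}`, here realized as
`Fin (n−1) → ℤ` with coordinate `t` corresponding to the index `t+1`). Then the
ℤ-submodule of `ℤ^{n−1}` generated by `{v_j : 1 ≤ j ≤ r} ∪ {ε_k : k ∈ J}` is all of
`ℤ^{n−1}`. Here `n = rq+1` with `r ≥ 1`, `q ≥ 2`, and
`C_j = {1,…,jq+1} \ {pq+1 : 1 ≤ p ≤ j}`. -/
theorem stmt_15 (r q : ℕ) (hr : 1 ≤ r) (hq : 2 ≤ q) (n : ℕ) (hn : n = r * q + 1)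
    (i : ℕ → ℕ)
    (hi : ∀ j, 1 ≤ j → j ≤ r →
      1 ≤ i j ∧ i j ≤ j * q + 1 ∧ ∀ p, 1 ≤ p → p ≤ j → i j ≠ p * q + 1)
    (v : ℕ → Fin (n - 1) → ℤ)
    (hv : ∀ j, v j = fun t : Fin (n - 1) => if i j ≤ (t : ℕ) + 1 ∧ (t : ℕ) + 1 ≤ j * q then (1 : ℤ) else 0)
    (f : Fin r ⊕ {k : ℕ // 1 ≤ k ∧ k ≤ n - 1 ∧ ∀ j, 1 ≤ j → j ≤ r → k ≠ j * q}
        → Fin (n - 1) → ℤ)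
    (hfl : ∀ a : Fin r, f (Sum.inl a) = v ((a : ℕ) + 1))
    (hfr : ∀ k, f (Sum.inr k) = fun t : Fin (n - 1) => if (t : ℕ) + 1 = (k : ℕ) then (1 : ℤ) else 0) :
    Submodule.span ℤ (Set.range f) = ⊤ := by

  set S := Submodule.span ℤ (Set.range f) with hS
  have key : ∀ m : ℕ, ∀ t : Fin (n - 1), (t : ℕ) ≤ m → Pi.single t (1 : ℤ) ∈ S := by
    intro m
    induction m using Nat.strong_induction_on with
    | _ m ih =>
      intro t ht
      by_cases hcase : ∀ j, 1 ≤ j → j ≤ r → (t : ℕ) + 1 ≠ j * q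
      · -- ε_{t+1} is a generator
        have hk : 1 ≤ (t : ℕ) + 1 ∧ (t : ℕ) + 1 ≤ n - 1 ∧
            ∀ j, 1 ≤ j → j ≤ r → (t : ℕ) + 1 ≠ j * q := by
          refine ⟨Nat.le_add_left 1 _, ?_, hcase⟩
          omega
        have hmem : f (Sum.inr ⟨(t : ℕ) + 1, hk⟩) ∈ S :=
          Submodule.subset_span (Set.mem_range_self _)
        have heq : f (Sum.inr ⟨(t : ℕ) + 1, hk⟩) = Pi.single t (1 : ℤ) := by
          rw [hfr]
          funext s
          rcases eq_or_ne s t with h | h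
          · subst h; simp
          · have : (s : ℕ) + 1 ≠ (t : ℕ) + 1 := by
              intro hc
              exact h (Fin.ext (by omega))
            simp [this, Pi.single_eq_of_ne h]
            exact fun hc => h (Fin.ext hc)
        rwa [heq] at hmem
      · push_neg at hcase
        obtain ⟨j, hj1, hjr, hjq⟩ := hcase
        obtain ⟨hij1, hij2, hij3⟩ := hi j hj1 hjr
        have hijle : i j ≤ j * q := by
          have := hij3 j hj1 le_rfl
          omega
        -- the finset of coordinates appearing in v j
        set F : Finset (Fin (n - 1)) :=
          Finset.univ.filter (fun t' : Fin (n - 1) => i j ≤ (t' : ℕ) + 1 ∧ (t' : ℕ) + 1 ≤ j * q)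
          with hF
        have hvsum : v j = ∑ t' ∈ F, Pi.single t' (1 : ℤ) := by
          funext s
          rw [hv]
          simp only [Finset.sum_apply, Pi.single_apply]
          rw [Finset.sum_ite_eq]
          simp [hF]
        have htF : t ∈ F := by
          simp [hF]
          omega
        have hvj : v j ∈ S := by
          have : (⟨j - 1, by omega⟩ : Fin r) = (⟨j - 1, by omega⟩ : Fin r) := rfl
          have hmem : f (Sum.inl (⟨j - 1, by omega⟩ : Fin r)) ∈ S :=
            Submodule.subset_span (Set.mem_range_self _)
          rw [hfl] at hmem
          have hj' : (((⟨j - 1, by omega⟩ : Fin r) : ℕ) + 1) = j := by simp; omega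
          rwa [hj'] at hmem
        have hrest : ∀ t' ∈ F.erase t, Pi.single t' (1 : ℤ) ∈ S := by
          intro t' ht'
          obtain ⟨hne, htF'⟩ := Finset.mem_erase.mp ht'
          have h2 : (t' : ℕ) + 1 ≤ j * q := by
            simp [hF] at htF'
            omega
          have hlt : (t' : ℕ) < (t : ℕ) := by
            have : (t' : ℕ) ≠ (t : ℕ) := fun hc => hne (Fin.ext hc)
            omega
          exact ih (t' : ℕ) (lt_of_lt_of_le hlt ht) t' le_rfl
        have hsplit : v j = Pi.single t (1 : ℤ) + ∑ t' ∈ F.erase t, Pi.single t' (1 : ℤ) := by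
          rw [hvsum, ← Finset.add_sum_erase _ _ htF]
        have : Pi.single t (1 : ℤ) = v j - ∑ t' ∈ F.erase t, Pi.single t' (1 : ℤ) := by
          rw [hsplit]; abel
        rw [this]
        exact sub_mem hvj (Submodule.sum_mem _ hrest)
  rw [eq_top_iff, ← (Pi.basisFun ℤ (Fin (n - 1))).span_eq]
  apply Submodule.span_le.mpr
  rintro x ⟨t, rfl⟩
  have := key (t : ℕ) t le_rfl
  simpa [Pi.basisFun_apply] using this
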